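/- Let G be a digraph and f a discrete Morse function on G. If v_0 v_1 ⋯ v_n v_0 (n ≥ 1) is a directed loop in G (an allowed elementary path returning to its starting vertex), then f(v_i) > 0 for every 0 ≤ i ≤ n. -/

import Mathlib

/-- A digraph: a vertex set together with an irreflexive edge relation supported on the
vertex set (edges are ordered pairs off the diagonal). -/
structure DiGraph (V : Type) where
  verts : Set V
  Edge : V → V → Prop
  edge_mem_left : ∀ u v, Edge u v → u ∈ verts
  edge_mem_right : ∀ u v, Edge u v → v ∈ verts
  edge_ne : ∀ u v, Edge u v → u ≠ v

variable {V : Type}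

/-- An allowed elementary path: a nonempty list of vertices of `G` such that each
consecutive pair is a directed edge of `G`. -/
def IsAllowed (G : DiGraph V) (p : List V) : Prop :=
  p ≠ [] ∧ (∀ v ∈ p, v ∈ G.verts) ∧ p.Chain' G.Edge

/-- `Del p q` : `p` is obtained from `q` by deleting one vertex. -/
def Del (p q : List V) : Prop := ∃ i < q.length, p = q.eraseIdx i

/-- Value of a function on vertices extended to a path: the sum over its vertices. -/
def fval (f : V → ℝ) (p : List V) : ℝ := (p.map f).sum

/-- A discrete Morse function on a digraph `G`: a nonnegative function on vertices such
that for every allowed elementary path `p` there is (i) at most one allowed elementary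
path obtained from `p` by deleting one vertex with the same `f`-value, and (ii) at most
one allowed elementary path obtained from `p` by inserting one vertex with the same
`f`-value. -/
def IsMorse (G : DiGraph V) (f : V → ℝ) : Prop :=
  (∀ v, 0 ≤ f v) ∧
  ∀ p, IsAllowed G p →
    ((∀ β β', IsAllowed G β → Del β p → fval f β = fval f p →
        IsAllowed G β' → Del β' p → fval f β' = fval f p → β = β') ∧
     (∀ α α', IsAllowed G α → Del p α → fval f α = fval f p →
        IsAllowed G α' → Del p α' → fval f α' = fval f p → α = α'))

/-- An allowed elementary path is critical if no allowed path obtained by deleting one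
vertex has the same `f`-value, and no allowed path obtained by inserting one vertex has
the same `f`-value. -/
def IsCritical (G : DiGraph V) (f : V → ℝ) (p : List V) : Prop :=
  (¬ ∃ β, IsAllowed G β ∧ Del β p ∧ fval f β = fval f p) ∧
  (¬ ∃ α, IsAllowed G α ∧ Del p α ∧ fval f α = fval f p)

/-- A directed loop: an allowed elementary path `v₀ v₁ ⋯ vₙ v₀` with `n ≥ 1`. -/
def IsLoop (G : DiGraph V) (p : List V) : Prop :=
  IsAllowed G p ∧ 3 ≤ p.length ∧ p.head? = p.getLast?

/-- A simplicial allowed elementary path: all vertices distinct. -/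
def Simplicial (G : DiGraph V) (p : List V) : Prop := IsAllowed G p ∧ p.Nodup

/-- A pair of the combinatorial discrete gradient vector field `M(G,f)`:
`β` is obtained from `α` by inserting one vertex, and `f(α) = f(β)`. -/
def MPair (G : DiGraph V) (f : V → ℝ) (α β : List V) : Prop :=
  IsAllowed G α ∧ IsAllowed G β ∧ Del α β ∧ fval f α = fval f β

/-- `H` is a sub-digraph of `G`. -/
def Subdigraph (H G : DiGraph V) : Prop :=
  H.verts ⊆ G.verts ∧ ∀ u v, H.Edge u v → G.Edge u v

/-- If `f` is a discrete Morse function on a digraph `G` and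
`v₀v₁⋯vₙv₀` (`n ≥ 1`) is a directed loop in `G`, then `f` is strictly positive on all
vertices of the loop. -/
private lemma loop_key (G : DiGraph V) (f : V → ℝ) (hf : IsMorse G f) (v : V) (r : List V)
    (hr : r ≠ []) (h1 : IsAllowed G (v :: r)) (h2 : IsAllowed G (r ++ [v]))
    (hv : f v = 0) : False := by
  obtain ⟨-, hmem1, hch1⟩ := h1
  have hrA : IsAllowed G r :=
    ⟨hr, fun x hx => hmem1 x (List.mem_cons_of_mem _ hx), hch1.tail⟩
  have hd1 : Del r (v :: r) := ⟨0, by simp, by simp⟩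
  have hd2 : Del r (r ++ [v]) := by
    refine ⟨r.length, by simp, ?_⟩
    rw [← List.dropLast_eq_eraseIdx (by simp), List.dropLast_concat]
  have hval1 : fval f (v :: r) = fval f r := by simp [fval, hv]
  have hval2 : fval f (r ++ [v]) = fval f r := by simp [fval, hv]
  have heq : (v :: r) = r ++ [v] :=
    (hf.2 r hrA).2 (v :: r) (r ++ [v]) ⟨by simp, hmem1, hch1⟩ hd1 hval1 h2 hd2 hval2
  obtain ⟨hd, tl, rfl⟩ : ∃ hd tl, r = hd :: tl := by
    cases r with
    | nil => exact absurd rfl hr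
    | cons a l => exact ⟨a, l, rfl⟩
  have hvh : v = hd := by
    have := congrArg List.head? heq
    simpa using this
  have hedge : G.Edge v hd := (List.isChain_cons_cons.mp hch1).1
  exact G.edge_ne v hd hedge (by rw [hvh])

theorem pos_on_loop (G : DiGraph V) (f : V → ℝ) (hf : IsMorse G f)
    (p : List V) (hp : IsLoop G p) : ∀ v ∈ p, 0 < f v := by
  obtain ⟨⟨hne, hmem, hch⟩, hlen, hheads⟩ := hp
  intro v hvp
  by_contra hle
  have hv0 : f v = 0 := le_antisymm (not_lt.mp hle) (hf.1 v)
  obtain ⟨s, t, hst⟩ := List.append_of_mem hvp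
  subst hst
  have hmem' : ∀ x ∈ s ++ v :: t, x ∈ G.verts := hmem
  match s, t with
  | [], [] => simp at hlen
  | [], c :: t' =>
    -- p = v :: c :: t', head = v so last = v
    simp only [List.nil_append] at hheads
    have hlast : (c :: t').getLast? = some v := by
      rw [← List.getLast?_cons_cons (a := v)]
      rw [← hheads]; rfl
    set r : List V := (c :: t').dropLast with hrdef
    have hteq : c :: t' = r ++ [v] :=
      (List.dropLast_append_getLast? v hlast).symm
    have hr : r ≠ [] := by
      rcases t' with _ | ⟨d, t''⟩
      · simp at hlen
      · simp [hrdef]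
    have hpre : (v :: r) <+: (v :: c :: t') := by
      rw [hteq]; exact ⟨[v], by simp⟩
    refine loop_key G f hf v r hr ⟨by simp, ?_, hch.prefix hpre⟩ ?_ hv0
    · intro x hx; exact hmem' x (hpre.subset hx)
    · rw [← hteq]
      exact ⟨by simp, fun x hx => hmem' x (by simp [hx]), hch.tail⟩
  | b :: s', [] =>
    -- p = b :: s' ++ [v], last = v so head b = v
    simp only [List.cons_append] at hheads
    have hbv : b = v := by
      have h2 : (b :: (s' ++ [v])).getLast? = some v := by
        rw [← List.cons_append, List.getLast?_append_cons]; rfl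
      have h3 : (some b : Option V) = some v := by rw [← h2, ← hheads]; rfl
      simpa using h3
    subst hbv
    have hr : s' ≠ [] := by rintro rfl; simp at hlen
    refine loop_key G f hf b s' hr ⟨by simp, ?_, ?_⟩ ⟨by simp, ?_, ?_⟩ hv0
    · intro x hx
      rcases List.mem_cons.mp hx with h | h
      · exact hmem' _ (by simp [h])
      · exact hmem' _ (by simp [h])
    · exact hch.prefix ⟨[b], by simp⟩
    · intro x hx; exact hmem' _ (by simpa using List.mem_cons_of_mem b hx)
    · exact hch.tail
  | b :: s', c :: t' =>
    -- interior case: p = b :: (s' ++ v :: c :: t'), last = b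
    simp only [List.cons_append] at hheads
    have hlast_t : (c :: t').getLast? = some b := by
      have h2 : (b :: (s' ++ v :: c :: t')).getLast? = (c :: t').getLast? := by
        rw [← List.cons_append, List.getLast?_append_cons, List.getLast?_cons_cons]
      rw [← h2, ← hheads]; rfl
    -- chain of the prefix b :: (s' ++ [v])
    have hchpre : List.Chain' G.Edge (b :: (s' ++ [v])) := by
      refine hch.prefix ⟨c :: t', ?_⟩
      simp
    have hjb : ∀ y ∈ (s' ++ [v]).head?, G.Edge b y := (List.isChain_cons.mp hchpre).1
    have hchsv : List.Chain' G.Edge (s' ++ [v]) := (List.isChain_cons.mp hchpre).2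
    set r : List V := (c :: t') ++ s' with hrdef
    have hr : r ≠ [] := by simp [hrdef]
    have hchvt : List.Chain' G.Edge (v :: c :: t') := hch.suffix ⟨b :: s', by simp⟩
    have hlastvt : (v :: c :: t').getLast? = some b := by
      rw [List.getLast?_cons_cons]; exact hlast_t
    -- chain of v :: r
    have hch1 : List.Chain' G.Edge (v :: r) := by
      have : (v :: r) = (v :: c :: t') ++ s' := by simp [hrdef]
      rw [this]; unfold List.Chain'; rw [List.isChain_append]
      refine ⟨hchvt, hchsv.prefix ⟨[v], rfl⟩, ?_⟩
      intro x hx y hy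
      rw [hlastvt] at hx
      simp only [Option.mem_def, Option.some.injEq] at hx
      subst hx
      apply hjb
      rcases s' with _ | ⟨d, s''⟩
      · simp at hy
      · simpa using hy
    -- chain of r ++ [v]
    have hch2 : List.Chain' G.Edge (r ++ [v]) := by
      have : r ++ [v] = (c :: t') ++ (s' ++ [v]) := by simp [hrdef]
      rw [this]; unfold List.Chain'; rw [List.isChain_append]
      refine ⟨hchvt.tail, hchsv, ?_⟩
      intro x hx y hy
      rw [hlast_t] at hx
      simp only [Option.mem_def, Option.some.injEq] at hx
      subst hx
      exact hjb y hy
    have hmemr : ∀ x ∈ r, x ∈ G.verts := by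
      intro x hx
      rw [hrdef] at hx
      rcases List.mem_append.mp hx with h | h
      · exact hmem' _ (by simp [h])
      · exact hmem' _ (by simp [h])
    refine loop_key G f hf v r hr ⟨by simp, ?_, hch1⟩ ⟨by simp, ?_, hch2⟩ hv0
    · intro x hx
      rcases List.mem_cons.mp hx with h | h
      · exact hmem' _ (by simp [h])
      · exact hmemr x h
    · intro x hx
      rcases List.mem_append.mp hx with h | h
      · exact hmemr x h
      · exact hmem' _ (by simp [List.mem_singleton.mp h])
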